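/- Let 0 < μ < 1/m_φ and assume F attains a finite minimal value F*. If the effective domain dom φ = {x : φ(x) < +∞} is compact, then F_μ is coercive: for every α > 0 there exists r ∈ ℝ such that F_μ(z) ≥ α‖z‖ + r for all z ∈ ℝⁿ. In particular F_μ is level-bounded. -/

import Mathlib

open scoped RealInnerProductSpace

noncomputable section

/-- `ℝⁿ` with the Euclidean norm. -/
abbrev En (n : ℕ) := EuclideanSpace ℝ (Fin n)

/-- `φ` is proper: finite somewhere and never `⊥`. -/
def ProperE {n : ℕ} (φ : En n → EReal) : Prop :=
  (∃ x, φ x ≠ ⊤) ∧ ∀ x, φ x ≠ ⊥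

/-- `φ` is `m`-weakly convex: `x ↦ φ x + (m/2)‖x‖²` is convex. -/
def WeaklyConvexOn {n : ℕ} (φ : En n → EReal) (m : ℝ) : Prop :=
  ∀ x y : En n, ∀ a b : ℝ, 0 ≤ a → 0 ≤ b → a + b = 1 →
    φ (a • x + b • y) + (((m / 2) * ‖a • x + b • y‖ ^ 2 : ℝ) : EReal) ≤
      (a : EReal) * (φ x + (((m / 2) * ‖x‖ ^ 2 : ℝ) : EReal)) +
        (b : EReal) * (φ y + (((m / 2) * ‖y‖ ^ 2 : ℝ) : EReal))

/-- `Mφ` is the Moreau envelope of `φ` with parameter `μ` and `xφ` the associated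
(unique) proximal mapping. -/
def IsMoreau {n : ℕ} (φ : En n → EReal) (μ : ℝ) (Mφ : En n → ℝ) (xφ : En n → En n) : Prop :=
  ∀ z : En n,
    (Mφ z : EReal) = φ (xφ z) + ((‖xφ z - z‖ ^ 2 / (2 * μ) : ℝ) : EReal) ∧
    (∀ x, (Mφ z : EReal) ≤ φ x + ((‖x - z‖ ^ 2 / (2 * μ) : ℝ) : EReal)) ∧
    (∀ x, φ x + ((‖x - z‖ ^ 2 / (2 * μ) : ℝ) : EReal) = (Mφ z : EReal) → x = xφ z)

/-- Real-valued version, for the convex function `g`. -/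
def IsMoreauR {n : ℕ} (g : En n → ℝ) (μ : ℝ) (Mg : En n → ℝ) (xg : En n → En n) : Prop :=
  ∀ z : En n,
    Mg z = g (xg z) + ‖xg z - z‖ ^ 2 / (2 * μ) ∧
    (∀ x, Mg z ≤ g x + ‖x - z‖ ^ 2 / (2 * μ)) ∧
    (∀ x, g x + ‖x - z‖ ^ 2 / (2 * μ) = Mg z → x = xg z)

/-- An extended-real-valued function is level-bounded if all its sublevel sets are bounded. -/
def LevelBoundedE {n : ℕ} (H : En n → EReal) : Prop :=
  ∀ α : ℝ, Bornology.IsBounded {x : En n | H x ≤ (α : EReal)}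

/-- A real-valued function is level-bounded if all its sublevel sets are bounded. -/
def LevelBoundedR {n : ℕ} (H : En n → ℝ) : Prop :=
  ∀ α : ℝ, Bornology.IsBounded {x : En n | H x ≤ α}

/-- if `dom φ` is compact then `F_μ` is coercive, and in particular
level-bounded. -/
theorem stmt11 {n : ℕ} (φ : En n → EReal) (g : En n → ℝ) (mφ μ : ℝ)
    (hproper : ProperE φ) (hlsc : LowerSemicontinuous φ)
    (hmφ : 0 ≤ mφ) (hweak : WeaklyConvexOn φ mφ)
    (hg : ConvexOn ℝ Set.univ g)
    (hμ : 0 < μ) (hμm : μ * mφ < 1)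
    (Fstar : ℝ)
    (hmin : ∃ xs : En n, φ xs - ((g xs : ℝ) : EReal) = (Fstar : EReal) ∧
      ∀ x, (Fstar : EReal) ≤ φ x - ((g x : ℝ) : EReal))
    (Mφ : En n → ℝ) (xφ : En n → En n) (hφprox : IsMoreau φ μ Mφ xφ)
    (Mg : En n → ℝ) (xg : En n → En n) (hgprox : IsMoreauR g μ Mg xg)
    (hdom : IsCompact {x : En n | φ x ≠ ⊤}) :
    (∀ α : ℝ, 0 < α → ∃ r : ℝ, ∀ z : En n, α * ‖z‖ + r ≤ Mφ z - Mg z) ∧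
    LevelBoundedR (fun z => Mφ z - Mg z) := by
  classical
  -- bound on the domain
  obtain ⟨R0, hKR0⟩ := hdom.isBounded.subset_closedBall (0 : En n)
  set R : ℝ := max R0 0 with hRdef
  have hR0 : 0 ≤ R := le_max_right _ _
  have hKR : ∀ x : En n, φ x ≠ ⊤ → ‖x‖ ≤ R := by
    intro x hx
    have := hKR0 hx
    simp only [Metric.mem_closedBall, dist_zero_right] at this
    exact this.trans (le_max_left _ _)
  -- continuity of g
  have hgc : Continuous g := by
    have := hg.continuousOn isOpen_univ
    rwa [continuousOn_univ] at this
  -- key facts about the prox point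
  have hfacts : ∀ z : En n, ∃ y : ℝ,
      Mφ z = y + ‖xφ z - z‖ ^ 2 / (2 * μ) ∧ Fstar + g (xφ z) ≤ y ∧ ‖xφ z‖ ≤ R := by
    intro z
    have h1 := (hφprox z).1
    have hne_top : φ (xφ z) ≠ ⊤ := by
      intro h
      rw [h] at h1
      simp [EReal.top_add_of_ne_bot] at h1
    have hne_bot : φ (xφ z) ≠ ⊥ := hproper.2 (xφ z)
    set y := (φ (xφ z)).toReal with hy
    have hyc : ((y : ℝ) : EReal) = φ (xφ z) := EReal.coe_toReal hne_top hne_bot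
    refine ⟨y, ?_, ?_, hKR _ hne_top⟩
    · rw [← hyc, ← EReal.coe_add] at h1
      exact_mod_cast h1
    · obtain ⟨xs, hxs1, hxs2⟩ := hmin
      have h2 := hxs2 (xφ z)
      rw [← hyc, ← EReal.coe_sub] at h2
      have : Fstar ≤ y - g (xφ z) := by exact_mod_cast h2
      linarith
  have key : ∀ α : ℝ, 0 < α → ∃ r : ℝ, ∀ z : En n, α * ‖z‖ + r ≤ Mφ z - Mg z := by
    intro α hα
    set δ : ℝ := μ * α with hδdef
    have hδ : 0 < δ := mul_pos hμ hα
    -- bounds on g on balls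
    obtain ⟨xM, _, hxM⟩ := (isCompact_closedBall (0 : En n) (R + δ)).exists_isMaxOn
      ⟨0, by simp; positivity⟩ hgc.continuousOn
    obtain ⟨xm, _, hxm⟩ := (isCompact_closedBall (0 : En n) R).exists_isMinOn
      ⟨0, by simp [hR0]⟩ hgc.continuousOn
    have hxM' : ∀ x ∈ Metric.closedBall (0 : En n) (R + δ), g x ≤ g xM := hxM
    have hxm' : ∀ x ∈ Metric.closedBall (0 : En n) R, g xm ≤ g x := hxm
    set Cmax : ℝ := g xM with hCmaxdef
    set Cmin : ℝ := g xm with hCmindef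
    have hCmM : Cmin ≤ Cmax := by
      have h1 := hxm' 0 (by simp [hR0])
      have h2 := hxM' 0 (by simp; positivity)
      linarith
    refine ⟨Fstar + (Cmin - Cmax) - δ ^ 2 / (2 * μ) - α * (R + δ), ?_⟩
    intro z
    obtain ⟨y, hMφ, hyF, hxφR⟩ := hfacts z
    set d : ℝ := ‖xφ z - z‖ with hddef
    have hd0 : 0 ≤ d := norm_nonneg _
    have hzd : ‖z‖ ≤ d + R := by
      have : ‖z‖ ≤ ‖z - xφ z‖ + ‖xφ z‖ := by
        simpa using norm_add_le (z - xφ z) (xφ z)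
      rw [norm_sub_rev] at this
      linarith
    have hgm : Cmin ≤ g (xφ z) := hxm' _ (by simp [hxφR])
    by_cases hcase : d < δ
    · -- small case
      have hMg : Mg z ≤ g (xφ z) + d ^ 2 / (2 * μ) := (hgprox z).2.1 (xφ z)
      have hF : Fstar ≤ Mφ z - Mg z := by
        rw [hMφ]; linarith
      have hz : α * ‖z‖ ≤ α * (d + R) := by
        exact mul_le_mul_of_nonneg_left hzd hα.le
      have hdδ : α * (d + R) ≤ α * (δ + R) := by
        have : d + R ≤ δ + R := by linarith
        exact mul_le_mul_of_nonneg_left this hα.le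
      have hδ2 : 0 ≤ δ ^ 2 / (2 * μ) := by positivity
      nlinarith [hz, hdδ, hF]
    · -- large case: d ≥ δ > 0
      push_neg at hcase
      have hdpos : 0 < d := lt_of_lt_of_le hδ hcase
      set t : ℝ := δ / d with htdef
      have ht0 : 0 < t := div_pos hδ hdpos
      have ht1 : t ≤ 1 := (div_le_one hdpos).mpr hcase
      set w : En n := xφ z + t • (z - xφ z) with hwdef
      have hwz : ‖w - z‖ = d - δ := by
        have : w - z = (t - 1) • (z - xφ z) := by
          rw [hwdef]
          module
        rw [this, norm_smul]
        rw [norm_sub_rev] at hddef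
        rw [← hddef, Real.norm_eq_abs, abs_of_nonpos (by linarith), htdef]
        field_simp
        ring
      have hwb : ‖w‖ ≤ R + δ := by
        have h1 : ‖w‖ ≤ ‖xφ z‖ + ‖t • (z - xφ z)‖ := norm_add_le _ _
        have h2 : ‖t • (z - xφ z)‖ = δ := by
          rw [norm_smul, Real.norm_eq_abs, abs_of_pos ht0, norm_sub_rev, ← hddef, htdef]
          field_simp
        rw [h2] at h1
        linarith
      have hgw : g w ≤ Cmax := hxM' _ (by simp [hwb])
      have hMg : Mg z ≤ Cmax + (d - δ) ^ 2 / (2 * μ) := by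
        have := (hgprox z).2.1 w
        rw [hwz] at this
        linarith
      -- F_μ z ≥ Fstar + Cmin - Cmax - δ²/(2μ) + α d
      have hμ2 : 0 < 2 * μ := by linarith
      have hquad : d ^ 2 / (2 * μ) - (d - δ) ^ 2 / (2 * μ) = α * d - δ ^ 2 / (2 * μ) := by
        rw [hδdef]
        field_simp
        ring
      have hF : Fstar + Cmin - Cmax - δ ^ 2 / (2 * μ) + α * d ≤ Mφ z - Mg z := by
        rw [hMφ]
        linarith [hquad, hMg, hyF, hgm]
      have hz : α * ‖z‖ ≤ α * (d + R) := mul_le_mul_of_nonneg_left hzd hα.le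
      have e1 : α * (d + R) = α * d + α * R := by ring
      have e2 : α * (R + δ) = α * R + α * δ := by ring
      have e3 : 0 < α * δ := mul_pos hα hδ
      linarith
  refine ⟨key, ?_⟩
  intro β
  obtain ⟨r, hr⟩ := key 1 one_pos
  have : {z : En n | Mφ z - Mg z ≤ β} ⊆ Metric.closedBall 0 (β - r) := by
    intro z hz
    simp only [Set.mem_setOf_eq] at hz
    have := hr z
    simp only [Metric.mem_closedBall, dist_zero_right]
    linarith
  exact (Metric.isBounded_closedBall).subset this
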